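/- Let d = p² with p prime. The real span of A ∪ B ∪ C inside the real vector space of self-adjoint d×d complex matrices has dimension 3p² − 2p. -/

import Mathlib

open Complex Matrix
open scoped ComplexOrder

noncomputable section

/-- `omega n = exp(2 π i / n)`, a primitive `n`-th root of unity. -/
def omega (n : ℕ) : ℂ := Complex.exp (2 * Real.pi * Complex.I / n)

/-- The standard basis vector `a i` of `ℂ^d`. -/
def stdVec (d : ℕ) (i : Fin d) : Fin d → ℂ := fun k => if k = i then 1 else 0

/-- The Fourier (DFT) basis vector `b j = (1/√d) ∑ i, ω_d^(i j) • a i`. -/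
def fourierVec (d : ℕ) (j : Fin d) : Fin d → ℂ :=
  fun i => ((1 / Real.sqrt d : ℝ) : ℂ) * omega d ^ (i.val * j.val)

/-- The rank-one projector `|v⟩⟨v|` of a vector `v`, as a matrix. -/
def proj (d : ℕ) (v : Fin d → ℂ) : Matrix (Fin d) (Fin d) ℂ :=
  Matrix.of fun i k => v i * (starRingEnd ℂ) (v k)

/-- The Kirkwood-Dirac quasiprobability `Q i j F = ⟨b j|a i⟩ * ⟨a i|F|b j⟩`. -/
def KDQ (d : ℕ) (F : Matrix (Fin d) (Fin d) ℂ) (i j : Fin d) : ℂ :=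
  (starRingEnd ℂ) (fourierVec d j i) * ∑ k, F i k * fourierVec d j k

/-- The set `KD⁺` of KD classical density matrices: positive semidefinite, trace one,
and all KD quasiprobabilities are nonnegative reals. -/
def KDplus (d : ℕ) : Set (Matrix (Fin d) (Fin d) ℂ) :=
  {ρ | ρ.PosSemidef ∧ ρ.trace = 1 ∧
    ∀ i j, (KDQ d ρ i j).im = 0 ∧ 0 ≤ (KDQ d ρ i j).re}

/-- The set `KD^r` of self-adjoint operators whose KD distribution is everywhere real. -/
def KDr (d : ℕ) : Set (Matrix (Fin d) (Fin d) ℂ) :=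
  {F | F.IsHermitian ∧ ∀ i j, (KDQ d F i j).im = 0}

/-- `A = {|a i⟩⟨a i| : i ∈ ℤ_d}`. -/
def setA (d : ℕ) : Set (Matrix (Fin d) (Fin d) ℂ) :=
  {M | ∃ i : Fin d, M = proj d (stdVec d i)}

/-- `B = {|b j⟩⟨b j| : j ∈ ℤ_d}`. -/
def setB (d : ℕ) : Set (Matrix (Fin d) (Fin d) ℂ) :=
  {M | ∃ j : Fin d, M = proj d (fourierVec d j)}

/-- For `d = p * q` : `ψ m s = (1/√q) ∑ k ∈ ℤ_q, ω_q^(s k) • a (k p + m)`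
(so the `i`-th coordinate is nonzero iff `i ≡ m [MOD p]`, with `k = i / p`). -/
def psiPQ (d p q : ℕ) (m : Fin p) (s : Fin q) : Fin d → ℂ :=
  fun i => if i.val % p = m.val then
    ((1 / Real.sqrt q : ℝ) : ℂ) * omega q ^ (s.val * (i.val / p)) else 0

/-- For `d = p * q` : `φ m' s' = (1/√p) ∑ k ∈ ℤ_p, ω_p^(s' k) • a (k q + m')`. -/
def phiPQ (d p q : ℕ) (m' : Fin q) (s' : Fin p) : Fin d → ℂ :=
  fun i => if i.val % q = m'.val then
    ((1 / Real.sqrt p : ℝ) : ℂ) * omega p ^ (s'.val * (i.val / q)) else 0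

/-- For `d = p ^ 2` : `C = {|ψ m s⟩⟨ψ m s| : m, s ∈ ℤ_p}`. -/
def setC2 (d p : ℕ) : Set (Matrix (Fin d) (Fin d) ℂ) :=
  {M | ∃ m s : Fin p, M = proj d (psiPQ d p p m s)}

/-- For `d = p * q` : `C = {|ψ m s⟩⟨ψ m s| : m ∈ ℤ_p, s ∈ ℤ_q}`. -/
def setC (d p q : ℕ) : Set (Matrix (Fin d) (Fin d) ℂ) :=
  {M | ∃ (m : Fin p) (s : Fin q), M = proj d (psiPQ d p q m s)}

/-- For `d = p * q` : `D = {|φ m' s'⟩⟨φ m' s'| : m' ∈ ℤ_q, s' ∈ ℤ_p}`. -/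
def setD (d p q : ℕ) : Set (Matrix (Fin d) (Fin d) ℂ) :=
  {M | ∃ (m' : Fin q) (s' : Fin p), M = proj d (phiPQ d p q m' s')}

/-- Matrix entries in the Fourier basis: `⟨b k|G|b j⟩`. -/
def entryB (d : ℕ) (G : Matrix (Fin d) (Fin d) ℂ) (k j : Fin d) : ℂ :=
  ∑ i, ∑ l, (starRingEnd ℂ) (fourierVec d k i) * G i l * fourierVec d j l

/-! ### Auxiliary lemmas -/

lemma omega_ne_zero (n : ℕ) : omega n ≠ 0 := Complex.exp_ne_zero _

lemma omega_prim (n : ℕ) (hn : n ≠ 0) : IsPrimitiveRoot (omega n) n :=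
  Complex.isPrimitiveRoot_exp n hn

lemma omega_zpow_eq_one (n : ℕ) (hn : n ≠ 0) (c : ℤ) (h : (n:ℤ) ∣ c) :
    omega n ^ c = 1 :=
  ((omega_prim n hn).zpow_eq_one_iff_dvd c).2 h

lemma omega_zpow_eq_one_iff (n : ℕ) (hn : n ≠ 0) (c : ℤ) :
    omega n ^ c = 1 ↔ (n:ℤ) ∣ c :=
  (omega_prim n hn).zpow_eq_one_iff_dvd c

/-- Orthogonality of characters. -/
lemma orth (n : ℕ) (hn : 0 < n) (c : ℤ) :
    ∑ t : Fin n, omega n ^ (c * t) = if (n:ℤ) ∣ c then (n:ℂ) else 0 := by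
  have key : ∀ t : Fin n, omega n ^ (c * (t:ℤ)) = (omega n ^ c) ^ (t : ℕ) := by
    intro t
    rw [_root_.zpow_mul, zpow_natCast]
  rw [Finset.sum_congr rfl (fun t _ => key t)]
  rw [Fin.sum_univ_eq_sum_range (fun t => (omega n ^ c) ^ t) n]
  by_cases h : (n:ℤ) ∣ c
  · simp [omega_zpow_eq_one n hn.ne' c h, h]
  · rw [if_neg h]
    have hne : omega n ^ c ≠ 1 := fun hc => h ((omega_zpow_eq_one_iff n hn.ne' c).1 hc)
    rw [geom_sum_eq hne]
    have : (omega n ^ c) ^ n = 1 := by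
      rw [← zpow_natCast, ← _root_.zpow_mul, mul_comm, _root_.zpow_mul, zpow_natCast,
        (omega_prim n hn.ne').pow_eq_one, _root_.one_zpow]
    rw [this]
    simp

lemma conj_omega_zpow (n : ℕ) (c : ℤ) :
    (starRingEnd ℂ) (omega n ^ c) = omega n ^ (-c) := by
  rw [omega, ← Complex.exp_int_mul, ← Complex.exp_int_mul, ← Complex.exp_conj]
  congr 1
  simp [_root_.map_mul, map_div₀, Complex.conj_I, map_ofNat]
  ring

/-- Fourier inversion. -/
lemma inv_fourier (n : ℕ) (hn : 0 < n) (v : Fin n → ℂ) (j₀ : Fin n) :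
    ∑ t : Fin n, (∑ j : Fin n, v j * omega n ^ ((t:ℤ) * (j:ℤ))) *
      omega n ^ (-((t:ℤ) * (j₀:ℤ))) = (n : ℂ) * v j₀ := by
  have h1 : ∀ t : Fin n, (∑ j : Fin n, v j * omega n ^ ((t:ℤ) * (j:ℤ))) *
      omega n ^ (-((t:ℤ) * (j₀:ℤ)))
      = ∑ j : Fin n, v j * omega n ^ (((j:ℤ) - (j₀:ℤ)) * (t:ℤ)) := by
    intro t
    rw [Finset.sum_mul]
    refine Finset.sum_congr rfl fun j _ => ?_
    rw [mul_assoc, ← zpow_add₀ (omega_ne_zero n)]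
    ring_nf
  rw [Finset.sum_congr rfl (fun t _ => h1 t), Finset.sum_comm]
  have h2 : ∀ j : Fin n, ∑ t : Fin n, v j * omega n ^ (((j:ℤ) - (j₀:ℤ)) * (t:ℤ))
      = v j * (if (n:ℤ) ∣ ((j:ℤ) - (j₀:ℤ)) then (n:ℂ) else 0) := by
    intro j
    rw [← Finset.mul_sum, orth n hn]
  rw [Finset.sum_congr rfl (fun j _ => h2 j)]
  rw [Finset.sum_eq_single j₀]
  · simp [mul_comm]
  · intro j _ hne
    rw [if_neg, mul_zero]
    intro hdvd
    have hj := j.isLt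
    have hj0 := j₀.isLt
    have heq : ((j:ℤ) - (j₀:ℤ)) = 0 :=
      Int.eq_zero_of_abs_lt_dvd hdvd (by rw [abs_lt]; omega)
    exact hne (Fin.ext (by omega))
  · simp

/-! ### Entry formulas -/

lemma projA_apply (d : ℕ) (i x y : Fin d) :
    proj d (stdVec d i) x y = if x = i ∧ y = i then 1 else 0 := by
  simp only [proj, stdVec, Matrix.of_apply]
  split_ifs with h1 h2 h3 <;> simp_all

lemma sqrt_sq_inv (n : ℕ) (hn : 0 < n) :
    ((1 / Real.sqrt n : ℝ) : ℂ) * ((1 / Real.sqrt n : ℝ) : ℂ) = 1 / (n:ℂ) := by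
  rw [← Complex.ofReal_mul]
  rw [div_mul_div_comm, one_mul, Real.mul_self_sqrt (by positivity)]
  push_cast
  rfl

lemma projB_apply (d : ℕ) (hd : 0 < d) (j x y : Fin d) :
    proj d (fourierVec d j) x y
      = (1/(d:ℂ)) * omega d ^ (((x:ℤ) - (y:ℤ)) * (j:ℤ)) := by
  simp only [proj, fourierVec, Matrix.of_apply, _root_.map_mul, Complex.conj_ofReal]
  rw [← zpow_natCast (omega d) (x.val * j.val), ← zpow_natCast (omega d) (y.val * j.val),
    conj_omega_zpow]
  rw [mul_mul_mul_comm, sqrt_sq_inv d hd, ← zpow_add₀ (omega_ne_zero d)]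
  congr 1
  push_cast
  ring

lemma projC_apply (d p : ℕ) (hp : 0 < p) (m s : Fin p) (x y : Fin d) :
    proj d (psiPQ d p p m s) x y
      = if x.val % p = m.val ∧ y.val % p = m.val then
          (1/(p:ℂ)) * omega p ^ ((s:ℤ) * (((x.val / p : ℕ) : ℤ) - ((y.val / p : ℕ) : ℤ)))
        else 0 := by
  simp only [proj, psiPQ, Matrix.of_apply]
  by_cases hx : x.val % p = m.val
  · by_cases hy : y.val % p = m.val
    · rw [if_pos hx, if_pos hy, if_pos ⟨hx, hy⟩, _root_.map_mul, Complex.conj_ofReal]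
      rw [← zpow_natCast (omega p) (s.val * (x.val / p)),
        ← zpow_natCast (omega p) (s.val * (y.val / p)), conj_omega_zpow]
      rw [mul_mul_mul_comm, sqrt_sq_inv p hp, ← zpow_add₀ (omega_ne_zero p)]
      congr 1
      push_cast
      ring
    · rw [if_neg hy, map_zero, mul_zero, if_neg (fun h => hy h.2)]
  · rw [if_neg hx, zero_mul, if_neg (fun h => hx h.1)]
/-! ### Arithmetic helpers -/

lemma aidx_lt (p k m : ℕ) (hk : k < p) (hm : m < p) : m + k * p < p ^ 2 := by
  have h1 : k + 1 ≤ p := hk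
  calc m + k * p < p + k * p := by omega
    _ = (k + 1) * p := by ring
    _ ≤ p * p := Nat.mul_le_mul_right p h1
    _ = p ^ 2 := (sq p).symm

lemma div_lt_of_lt_sq (p x : ℕ) (hp : 0 < p) (hx : x < p ^ 2) : x / p < p := by
  rw [Nat.div_lt_iff_lt_mul hp]
  calc x < p ^ 2 := hx
    _ = p * p := sq p

lemma int_dvd_iff_mod_eq (p a b : ℕ) : (p:ℤ) ∣ (a:ℤ) - (b:ℤ) ↔ a % p = b % p := by
  rw [← Nat.modEq_iff_dvd]
  exact ⟨fun h => h.symm, fun h => h.symm⟩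

lemma omega_zpow_congr (n : ℕ) (hn : n ≠ 0) (a b : ℤ) (h : (n:ℤ) ∣ a - b) :
    omega n ^ a = omega n ^ b := by
  rw [← sub_add_cancel a b, zpow_add₀ (omega_ne_zero n),
    omega_zpow_eq_one n hn _ h, one_mul]

lemma omega_sq_zpow (p : ℕ) (hp : 0 < p) (c : ℤ) :
    omega (p ^ 2) ^ ((p:ℤ) * c) = omega p ^ c := by
  have hbase : omega (p ^ 2) ^ (p:ℤ) = omega p := by
    rw [omega, omega, ← Complex.exp_int_mul]
    congr 1
    have hp' : (p:ℂ) ≠ 0 := Nat.cast_ne_zero.2 hp.ne'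
    push_cast
    field_simp
  rw [_root_.zpow_mul, hbase]

section Relations

variable {p d : ℕ} (hp : 0 < p) (hd : d = p ^ 2)

/-- index `m + k p` in `Fin d`. -/
def aidx (hp : 0 < p) (hd : d = p ^ 2) (k m : Fin p) : Fin d :=
  ⟨m.val + k.val * p, by rw [hd]; exact aidx_lt p k.val m.val k.isLt m.isLt⟩

lemma aidx_mod (k m : Fin p) : ((aidx hp hd k m : Fin d)).val % p = m.val := by
  simp only [aidx, Nat.add_mul_mod_self_right]
  exact Nat.mod_eq_of_lt m.isLt

lemma aidx_div (k m : Fin p) : ((aidx hp hd k m : Fin d)).val / p = k.val := by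
  simp only [aidx, Nat.add_mul_div_right _ _ hp]
  rw [Nat.div_eq_of_lt m.isLt, zero_add]

/-- Relation R1 : `∑ s, C m s = ∑ k, A (aidx k m)`. -/
lemma relR1 (m : Fin p) :
    ∑ s : Fin p, proj d (psiPQ d p p m s)
      = ∑ k : Fin p, proj d (stdVec d (aidx hp hd k m)) := by
  ext x y
  rw [Matrix.sum_apply, Matrix.sum_apply]
  have hxd : x.val < p ^ 2 := hd ▸ x.isLt
  have hyd : y.val < p ^ 2 := hd ▸ y.isLt
  have hxdiv : x.val / p < p := div_lt_of_lt_sq p x.val hp hxd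
  have hydiv : y.val / p < p := div_lt_of_lt_sq p y.val hp hyd
  have hxmod : x.val % p < p := Nat.mod_lt _ hp
  -- LHS
  have hL : ∑ s : Fin p, proj d (psiPQ d p p m s) x y
      = if x.val % p = m.val ∧ y.val % p = m.val then
          (1/(p:ℂ)) * (if (p:ℤ) ∣ (((x.val / p : ℕ) : ℤ) - ((y.val / p : ℕ) : ℤ))
            then (p:ℂ) else 0)
        else 0 := by
    rw [Finset.sum_congr rfl (fun s _ => projC_apply d p hp m s x y)]
    by_cases h : x.val % p = m.val ∧ y.val % p = m.val
    · simp only [h, if_true, and_self, ← Finset.mul_sum]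
      congr 1
      rw [← orth p hp]
      exact Finset.sum_congr rfl fun s _ => by rw [mul_comm]
    · rw [if_neg h]
      exact Finset.sum_eq_zero fun s _ => if_neg h
  -- RHS
  have hR : ∑ k : Fin p, proj d (stdVec d (aidx hp hd k m)) x y
      = if x = y ∧ x.val % p = m.val then 1 else 0 := by
    rw [Finset.sum_congr rfl (fun k _ => projA_apply d _ x y)]
    by_cases h : x = y ∧ x.val % p = m.val
    · obtain ⟨hxy, hxm⟩ := h
      subst hxy
      rw [if_pos ⟨rfl, hxm⟩]
      rw [Finset.sum_eq_single (⟨x.val / p, hxdiv⟩ : Fin p)]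
      · rw [if_pos]
        have hgoal : x = aidx hp hd ⟨x.val / p, hxdiv⟩ m := by
          apply Fin.ext
          show x.val = m.val + x.val / p * p
          rw [← hxm]
          exact (Nat.mod_add_div' x.val p).symm
        exact ⟨hgoal, hgoal⟩
      · intro k _ hk
        rw [if_neg]
        rintro ⟨h1, -⟩
        apply hk
        apply Fin.ext
        have h2 : x.val = m.val + k.val * p := congrArg Fin.val h1
        show k.val = x.val / p
        rw [h2, Nat.add_mul_div_right _ _ hp, Nat.div_eq_of_lt m.isLt, zero_add]
      · intro habs
        exact absurd (Finset.mem_univ _) habs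
    · rw [if_neg h]
      refine Finset.sum_eq_zero fun k _ => ?_
      rw [if_neg]
      rintro ⟨h1, h2⟩
      refine h ⟨h1.trans h2.symm, ?_⟩
      rw [h1]
      exact aidx_mod hp hd k m
  rw [hL, hR]
  by_cases hm : x.val % p = m.val ∧ y.val % p = m.val
  · rw [if_pos hm]
    by_cases hdvd : (p:ℤ) ∣ (((x.val / p : ℕ) : ℤ) - ((y.val / p : ℕ) : ℤ))
    · have hdd : x.val / p = y.val / p := by
        have h1 : ((x.val / p : ℕ) : ℤ) < p := by exact_mod_cast hxdiv
        have h2 : ((y.val / p : ℕ) : ℤ) < p := by exact_mod_cast hydiv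
        have h3 : (0:ℤ) ≤ ((x.val / p : ℕ) : ℤ) := Int.natCast_nonneg _
        have h4 : (0:ℤ) ≤ ((y.val / p : ℕ) : ℤ) := Int.natCast_nonneg _
        have h5 := Int.eq_zero_of_abs_lt_dvd hdvd (by rw [abs_lt]; omega)
        omega
      have hxy : x = y := by
        apply Fin.ext
        have h1 := Nat.mod_add_div x.val p
        have h2 := Nat.mod_add_div y.val p
        have h3 : x.val % p = y.val % p := hm.1.trans hm.2.symm
        rw [hdd, h3] at h1
        omega
      rw [if_pos hdvd, if_pos ⟨hxy, hm.1⟩]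
      have hpne : (p:ℂ) ≠ 0 := Nat.cast_ne_zero.2 hp.ne'
      field_simp
    · rw [if_neg hdvd, mul_zero, if_neg]
      rintro ⟨hxy, -⟩
      subst hxy
      exact hdvd ⟨0, by ring⟩
  · rw [if_neg hm, if_neg]
    rintro ⟨hxy, hxm⟩
    subst hxy
    exact hm ⟨hxm, hxm⟩

end Relations
section Relations2

variable {p d : ℕ}

/-- Relation R2 : `∑ m, C m s = ∑ t, B (s + t p)`. -/
lemma relR2 (hp : 0 < p) (hd : d = p ^ 2) (s : Fin p) :
    ∑ m : Fin p, proj d (psiPQ d p p m s)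
      = ∑ t : Fin p, proj d (fourierVec d (aidx hp hd t s)) := by
  subst hd
  have hp2 : 0 < p ^ 2 := by positivity
  have hpne : (p:ℂ) ≠ 0 := Nat.cast_ne_zero.2 hp.ne'
  ext x y
  rw [Matrix.sum_apply, Matrix.sum_apply]
  have hxdiv : x.val / p < p := div_lt_of_lt_sq p x.val hp x.isLt
  have hydiv : y.val / p < p := div_lt_of_lt_sq p y.val hp y.isLt
  have hxmod : x.val % p < p := Nat.mod_lt _ hp
  have hL : ∑ m : Fin p, proj (p^2) (psiPQ (p^2) p p m s) x y
      = if x.val % p = y.val % p then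
          (1/(p:ℂ)) * omega p ^ ((s:ℤ) * (((x.val / p : ℕ) : ℤ) - ((y.val / p : ℕ) : ℤ)))
        else 0 := by
    rw [Finset.sum_congr rfl (fun m _ => projC_apply (p^2) p hp m s x y)]
    by_cases h : x.val % p = y.val % p
    · rw [if_pos h, Finset.sum_eq_single (⟨x.val % p, hxmod⟩ : Fin p)]
      · rw [if_pos ⟨rfl, h.symm⟩]
      · intro m _ hm
        rw [if_neg]
        rintro ⟨h1, -⟩
        exact hm (Fin.ext h1.symm)
      · intro habs
        exact absurd (Finset.mem_univ _) habs
    · rw [if_neg h]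
      refine Finset.sum_eq_zero fun m _ => ?_
      rw [if_neg]
      rintro ⟨h1, h2⟩
      exact h (h1.trans h2.symm)
  have hR : ∑ t : Fin p, proj (p^2) (fourierVec (p^2) (aidx hp rfl t s)) x y
      = (1/((p^2 : ℕ):ℂ)) * omega (p^2) ^ (((x:ℤ)-(y:ℤ)) * (s:ℤ)) *
        (if (p:ℤ) ∣ ((x:ℤ)-(y:ℤ)) then (p:ℂ) else 0) := by
    rw [Finset.sum_congr rfl (fun t _ => projB_apply (p^2) hp2 (aidx hp rfl t s) x y)]
    have key : ∀ t : Fin p,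
        (1/((p^2 : ℕ):ℂ)) * omega (p^2) ^ (((x:ℤ)-(y:ℤ)) * ((aidx hp rfl t s : Fin (p^2)).val :ℤ))
        = ((1/((p^2 : ℕ):ℂ)) * omega (p^2) ^ (((x:ℤ)-(y:ℤ)) * (s:ℤ))) *
            omega p ^ (((x:ℤ)-(y:ℤ)) * (t:ℤ)) := by
      intro t
      have hval : ((aidx hp rfl t s : Fin (p^2)).val : ℤ) = (s:ℤ) + (t:ℤ) * p := by
        show ((s.val + t.val * p : ℕ) : ℤ) = (s:ℤ) + (t:ℤ) * p
        push_cast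
        ring
      rw [hval, mul_add, zpow_add₀ (omega_ne_zero _), mul_assoc]
      congr 1
      rw [← omega_sq_zpow p hp (((x:ℤ)-(y:ℤ)) * (t:ℤ))]
      congr 1
      ring
    rw [Finset.sum_congr rfl (fun t _ => key t), ← Finset.mul_sum, orth p hp]
  rw [hL, hR]
  by_cases h : x.val % p = y.val % p
  · rw [if_pos h, if_pos ((int_dvd_iff_mod_eq p x.val y.val).2 h)]
    have hx' : (x.val:ℤ) = ((x.val % p : ℕ):ℤ) + p * ((x.val / p : ℕ):ℤ) := by
      exact_mod_cast (Nat.mod_add_div x.val p).symm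
    have hy' : (y.val:ℤ) = ((y.val % p : ℕ):ℤ) + p * ((y.val / p : ℕ):ℤ) := by
      exact_mod_cast (Nat.mod_add_div y.val p).symm
    have hmod : ((x.val % p : ℕ):ℤ) = ((y.val % p : ℕ):ℤ) := by exact_mod_cast h
    have hn : ((x:ℤ)-(y:ℤ)) * (s:ℤ)
        = (p:ℤ) * ((((x.val / p : ℕ) : ℤ) - ((y.val / p : ℕ) : ℤ)) * (s:ℤ)) := by
      rw [hx', hy', hmod]
      ring
    rw [hn, omega_sq_zpow p hp]
    rw [mul_comm ((s:Fin p).val:ℤ) ((((x.val / p : ℕ) : ℤ) - ((y.val / p : ℕ) : ℤ)))]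
    push_cast
    field_simp
  · rw [if_neg h, if_neg (fun hdvd => h ((int_dvd_iff_mod_eq p x.val y.val).1 hdvd)), mul_zero]

end Relations2
section Indep

variable {p : ℕ}

lemma entry_eq (hp : 0 < p)
    (α β : Fin (p^2) → ℝ) (γ : Fin p → Fin p → ℝ)
    (hsum : ∑ i, α i • proj (p^2) (stdVec (p^2) i)
      + ∑ j, β j • proj (p^2) (fourierVec (p^2) j)
      + ∑ m : Fin p, ∑ s : Fin p, γ m s • proj (p^2) (psiPQ (p^2) p p m s) = 0)
    (x y : Fin (p^2)) :
    (if x = y then (α x : ℂ) else 0)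
    + (1/((p^2:ℕ):ℂ)) * (∑ j, (β j : ℂ) * omega (p^2) ^ (((x:ℤ)-(y:ℤ)) * (j:ℤ)))
    + (if x.val % p = y.val % p then
        (1/(p:ℂ)) * ∑ s : Fin p, (γ ⟨x.val % p, Nat.mod_lt _ hp⟩ s : ℂ) *
          omega p ^ ((s:ℤ) * (((x.val/p : ℕ):ℤ) - ((y.val/p : ℕ):ℤ)))
       else 0) = 0 := by
  have hp2 : 0 < p ^ 2 := by positivity
  have h0 := congrFun (congrFun hsum x) y
  simp only [Matrix.add_apply, Matrix.sum_apply, Matrix.smul_apply, Matrix.zero_apply,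
    Complex.real_smul] at h0
  have hA : ∑ i, (α i : ℂ) * proj (p^2) (stdVec (p^2) i) x y
      = if x = y then (α x : ℂ) else 0 := by
    rw [Finset.sum_congr rfl (fun i _ => by rw [projA_apply])]
    by_cases hxy : x = y
    · subst hxy
      rw [if_pos rfl]
      simp
    · rw [if_neg hxy]
      refine Finset.sum_eq_zero fun i _ => ?_
      rw [if_neg, mul_zero]
      rintro ⟨rfl, rfl⟩
      exact hxy rfl
  have hB : ∑ j, (β j : ℂ) * proj (p^2) (fourierVec (p^2) j) x y
      = (1/((p^2:ℕ):ℂ)) * (∑ j, (β j : ℂ) * omega (p^2) ^ (((x:ℤ)-(y:ℤ)) * (j:ℤ))) := by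
    rw [Finset.mul_sum]
    exact Finset.sum_congr rfl fun j _ => by rw [projB_apply _ hp2]; ring
  have hC : ∑ m : Fin p, ∑ s : Fin p, (γ m s : ℂ) * proj (p^2) (psiPQ (p^2) p p m s) x y
      = if x.val % p = y.val % p then
          (1/(p:ℂ)) * ∑ s : Fin p, (γ ⟨x.val % p, Nat.mod_lt _ hp⟩ s : ℂ) *
            omega p ^ ((s:ℤ) * (((x.val/p : ℕ):ℤ) - ((y.val/p : ℕ):ℤ)))
        else 0 := by
    have hinner : ∀ m : Fin p, ∑ s : Fin p, (γ m s : ℂ) * proj (p^2) (psiPQ (p^2) p p m s) x y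
        = if x.val % p = m.val ∧ y.val % p = m.val then
            ∑ s : Fin p, (γ m s : ℂ) *
              ((1/(p:ℂ)) * omega p ^ ((s:ℤ) * (((x.val/p : ℕ):ℤ) - ((y.val/p : ℕ):ℤ))))
          else 0 := by
      intro m
      by_cases h : x.val % p = m.val ∧ y.val % p = m.val
      · rw [if_pos h]
        exact Finset.sum_congr rfl fun s _ => by rw [projC_apply _ _ hp, if_pos h]
      · rw [if_neg h]
        refine Finset.sum_eq_zero fun s _ => ?_
        rw [projC_apply _ _ hp, if_neg h, mul_zero]
    rw [Finset.sum_congr rfl (fun m _ => hinner m)]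
    by_cases h : x.val % p = y.val % p
    · rw [if_pos h, Finset.sum_eq_single (⟨x.val % p, Nat.mod_lt _ hp⟩ : Fin p)]
      · rw [if_pos ⟨rfl, h.symm⟩, Finset.mul_sum]
        exact Finset.sum_congr rfl fun s _ => by ring
      · intro m _ hm
        rw [if_neg]
        rintro ⟨h1, -⟩
        exact hm (Fin.ext h1.symm)
      · intro habs
        exact absurd (Finset.mem_univ _) habs
    · rw [if_neg h]
      refine Finset.sum_eq_zero fun m _ => ?_
      rw [if_neg]
      rintro ⟨h1, h2⟩
      exact h (h1.trans h2.symm)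
  rw [← hA, ← hB, ← hC]
  exact h0

lemma indep_coeffs (hp : 0 < p)
    (α β : Fin (p^2) → ℝ) (γ : Fin p → Fin p → ℝ)
    (hβ0 : ∀ j : Fin (p^2), j.val < p → β j = 0)
    (hγ0 : ∀ m : Fin p, ∀ s : Fin p, s.val = 0 → γ m s = 0)
    (hsum : ∑ i, α i • proj (p^2) (stdVec (p^2) i)
      + ∑ j, β j • proj (p^2) (fourierVec (p^2) j)
      + ∑ m : Fin p, ∑ s : Fin p, γ m s • proj (p^2) (psiPQ (p^2) p p m s) = 0) :
    (∀ i, α i = 0) ∧ (∀ j, β j = 0) ∧ (∀ m s, γ m s = 0) := by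
  have hp2 : 0 < p ^ 2 := by positivity
  have hple : p ≤ p ^ 2 := Nat.le_self_pow two_ne_zero p
  have hpne : (p:ℂ) ≠ 0 := Nat.cast_ne_zero.2 hp.ne'
  have hp2ne : ((p^2:ℕ):ℂ) ≠ 0 := Nat.cast_ne_zero.2 hp2.ne'
  have hE := entry_eq hp α β γ hsum
  -- Step 1 : β = 0
  have hg : ∀ n : Fin (p^2), ¬ (p ∣ n.val) →
      ∑ j, (β j : ℂ) * omega (p^2) ^ ((n:ℤ)*(j:ℤ)) = 0 := by
    intro n hn
    have hn0 : n.val ≠ 0 := fun h => hn (h ▸ dvd_zero p)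
    have h0 := hE n ⟨0, hp2⟩
    simp only [Fin.val_mk, Nat.cast_zero, sub_zero, Nat.zero_mod] at h0
    rw [if_neg (fun h : n = ⟨0, hp2⟩ => hn0 (congrArg Fin.val h))] at h0
    rw [if_neg (fun h : n.val % p = 0 => hn (Nat.dvd_of_mod_eq_zero h))] at h0
    rw [zero_add, add_zero] at h0
    rcases mul_eq_zero.1 h0 with h | h
    · exact absurd h (one_div_ne_zero hp2ne)
    · exact h
  have hβ : ∀ j, β j = 0 := by
    intro j₀
    have hj₁lt : j₀.val % p < p ^ 2 := lt_of_lt_of_le (Nat.mod_lt _ hp) hple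
    set j₁ : Fin (p^2) := ⟨j₀.val % p, hj₁lt⟩ with hj₁def
    have hj₁ : β j₁ = 0 := hβ0 j₁ (Nat.mod_lt _ hp)
    have inv₀ := inv_fourier (p^2) hp2 (fun j => (β j : ℂ)) j₀
    have inv₁ := inv_fourier (p^2) hp2 (fun j => (β j : ℂ)) j₁
    have hzero : ∀ t : Fin (p^2),
        (∑ j, (β j:ℂ) * omega (p^2) ^ ((t:ℤ)*(j:ℤ))) *
          (omega (p^2) ^ (-((t:ℤ)*(j₀:ℤ))) - omega (p^2) ^ (-((t:ℤ)*(j₁:ℤ)))) = 0 := by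
      intro t
      by_cases hdvd : p ∣ t.val
      · have heq : omega (p^2) ^ (-((t:ℤ)*(j₀:ℤ))) = omega (p^2) ^ (-((t:ℤ)*(j₁:ℤ))) := by
          apply omega_zpow_congr _ hp2.ne'
          obtain ⟨a, ha⟩ := hdvd
          have ht : ((t:Fin (p^2)).val:ℤ) = (p:ℤ) * (a:ℤ) := by exact_mod_cast ha
          have hj : ((j₀:Fin (p^2)).val:ℤ)
              = ((j₁:Fin (p^2)).val:ℤ) + (p:ℤ) * ((j₀.val / p : ℕ):ℤ) := by
            have h1 := Nat.mod_add_div j₀.val p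
            have h2 : j₁.val = j₀.val % p := by rw [hj₁def]
            rw [h2]
            exact_mod_cast h1.symm
          refine ⟨-((a:ℤ) * ((j₀.val / p : ℕ):ℤ)), ?_⟩
          rw [ht, hj]
          push_cast
          ring
        rw [heq, sub_self, mul_zero]
      · rw [hg t hdvd, zero_mul]
    have hsum0 : (0:ℂ) = ((p^2:ℕ):ℂ) * (β j₀:ℂ) - ((p^2:ℕ):ℂ) * (β j₁:ℂ) := by
      calc (0:ℂ) = ∑ t : Fin (p^2), (∑ j, (β j:ℂ) * omega (p^2) ^ ((t:ℤ)*(j:ℤ))) *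
            (omega (p^2) ^ (-((t:ℤ)*(j₀:ℤ))) - omega (p^2) ^ (-((t:ℤ)*(j₁:ℤ)))) :=
          (Finset.sum_eq_zero (fun t _ => hzero t)).symm
        _ = ∑ t : Fin (p^2), ((∑ j, (β j:ℂ) * omega (p^2) ^ ((t:ℤ)*(j:ℤ))) *
              omega (p^2) ^ (-((t:ℤ)*(j₀:ℤ)))
            - (∑ j, (β j:ℂ) * omega (p^2) ^ ((t:ℤ)*(j:ℤ))) *
              omega (p^2) ^ (-((t:ℤ)*(j₁:ℤ)))) :=
          Finset.sum_congr rfl fun t _ => mul_sub _ _ _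
        _ = (∑ t : Fin (p^2), (∑ j, (β j:ℂ) * omega (p^2) ^ ((t:ℤ)*(j:ℤ))) *
              omega (p^2) ^ (-((t:ℤ)*(j₀:ℤ))))
            - ∑ t : Fin (p^2), (∑ j, (β j:ℂ) * omega (p^2) ^ ((t:ℤ)*(j:ℤ))) *
              omega (p^2) ^ (-((t:ℤ)*(j₁:ℤ))) := Finset.sum_sub_distrib _ _
        _ = ((p^2:ℕ):ℂ) * (β j₀:ℂ) - ((p^2:ℕ):ℂ) * (β j₁:ℂ) := by rw [inv₀, inv₁]
    rw [hj₁] at hsum0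
    simp only [Complex.ofReal_zero, mul_zero, sub_zero] at hsum0
    have hcast : (β j₀ : ℂ) = 0 := (mul_eq_zero.1 hsum0.symm).resolve_left hp2ne
    exact_mod_cast hcast
  -- Step 2 : γ = 0
  have hγ : ∀ m s, γ m s = 0 := by
    intro m
    have hc : ∀ u : Fin p, u.val ≠ 0 →
        ∑ s : Fin p, (γ m s:ℂ) * omega p ^ ((u:ℤ)*(s:ℤ)) = 0 := by
      intro u hu
      have hxlt : m.val + u.val * p < p ^ 2 := aidx_lt p u.val m.val u.isLt m.isLt
      set x : Fin (p^2) := ⟨m.val + u.val * p, hxlt⟩ with hxdef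
      set y : Fin (p^2) := ⟨m.val, lt_of_lt_of_le m.isLt hple⟩ with hydef
      have hxm : x.val % p = m.val := by
        show (m.val + u.val * p) % p = m.val
        rw [Nat.add_mul_mod_self_right, Nat.mod_eq_of_lt m.isLt]
      have hxdiv : x.val / p = u.val := by
        show (m.val + u.val * p) / p = u.val
        rw [Nat.add_mul_div_right _ _ hp, Nat.div_eq_of_lt m.isLt, zero_add]
      have hym : y.val % p = m.val := Nat.mod_eq_of_lt m.isLt
      have hydiv : y.val / p = 0 := Nat.div_eq_of_lt m.isLt
      have h0 := hE x y
      have hxy : x ≠ y := by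
        intro h
        have h1 := congrArg Fin.val h
        have h2 : p ≤ u.val * p := Nat.le_mul_of_pos_left p (Nat.pos_of_ne_zero hu)
        rw [hxdef, hydef] at h1
        simp only [Fin.val_mk] at h1
        omega
      rw [if_neg hxy] at h0
      rw [if_pos (hxm.trans hym.symm)] at h0
      have hfin : (⟨x.val % p, Nat.mod_lt _ hp⟩ : Fin p) = m := Fin.ext hxm
      rw [hfin, hxdiv, hydiv] at h0
      simp only [Nat.cast_zero, sub_zero] at h0
      simp only [hβ, Complex.ofReal_zero, zero_mul, Finset.sum_const_zero, mul_zero,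
        zero_add, add_zero] at h0
      have hflip : ∑ s : Fin p, (γ m s:ℂ) * omega p ^ ((u:ℤ)*(s:ℤ))
          = ∑ s : Fin p, (γ m s:ℂ) * omega p ^ ((s:ℤ)*((u.val:ℕ):ℤ)) := by
        refine Finset.sum_congr rfl fun s _ => ?_
        congr 1
        rw [mul_comm]
      rw [hflip]
      rcases mul_eq_zero.1 h0 with h | h
      · exact absurd h (one_div_ne_zero hpne)
      · exact h
    intro s₀
    have hγ1 : γ m ⟨0, hp⟩ = 0 := hγ0 m ⟨0, hp⟩ rfl
    have inv₀ := inv_fourier p hp (fun s => (γ m s:ℂ)) s₀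
    have inv₁ := inv_fourier p hp (fun s => (γ m s:ℂ)) ⟨0, hp⟩
    have hzero : ∀ u : Fin p,
        (∑ s, (γ m s:ℂ) * omega p ^ ((u:ℤ)*(s:ℤ))) *
          (omega p ^ (-((u:ℤ)*(s₀:ℤ))) - omega p ^ (-((u:ℤ)*(((⟨0,hp⟩:Fin p)):ℤ)))) = 0 := by
      intro u
      by_cases hu : u.val = 0
      · have hu' : ((u:Fin p):ℤ) = 0 := by exact_mod_cast hu
        rw [hu']
        simp
      · rw [hc u hu, zero_mul]
    have hsum0 : (0:ℂ) = (p:ℂ) * (γ m s₀:ℂ) - (p:ℂ) * (γ m ⟨0,hp⟩:ℂ) := by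
      calc (0:ℂ) = ∑ u : Fin p, (∑ s, (γ m s:ℂ) * omega p ^ ((u:ℤ)*(s:ℤ))) *
            (omega p ^ (-((u:ℤ)*(s₀:ℤ))) - omega p ^ (-((u:ℤ)*(((⟨0,hp⟩:Fin p)):ℤ)))) :=
          (Finset.sum_eq_zero (fun u _ => hzero u)).symm
        _ = ∑ u : Fin p, ((∑ s, (γ m s:ℂ) * omega p ^ ((u:ℤ)*(s:ℤ))) *
              omega p ^ (-((u:ℤ)*(s₀:ℤ)))
            - (∑ s, (γ m s:ℂ) * omega p ^ ((u:ℤ)*(s:ℤ))) *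
              omega p ^ (-((u:ℤ)*(((⟨0,hp⟩:Fin p)):ℤ)))) :=
          Finset.sum_congr rfl fun u _ => mul_sub _ _ _
        _ = (∑ u : Fin p, (∑ s, (γ m s:ℂ) * omega p ^ ((u:ℤ)*(s:ℤ))) *
              omega p ^ (-((u:ℤ)*(s₀:ℤ))))
            - ∑ u : Fin p, (∑ s, (γ m s:ℂ) * omega p ^ ((u:ℤ)*(s:ℤ))) *
              omega p ^ (-((u:ℤ)*(((⟨0,hp⟩:Fin p)):ℤ))) := Finset.sum_sub_distrib _ _
        _ = (p:ℂ) * (γ m s₀:ℂ) - (p:ℂ) * (γ m ⟨0,hp⟩:ℂ) := by rw [inv₀, inv₁]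
    rw [hγ1] at hsum0
    simp only [Complex.ofReal_zero, mul_zero, sub_zero] at hsum0
    have hcast : (γ m s₀ : ℂ) = 0 := (mul_eq_zero.1 hsum0.symm).resolve_left hpne
    exact_mod_cast hcast
  -- Step 3 : α = 0
  have hα : ∀ x, α x = 0 := by
    intro x
    have h0 := hE x x
    rw [if_pos rfl, if_pos rfl] at h0
    simp only [hβ, hγ, Complex.ofReal_zero, zero_mul, Finset.sum_const_zero, mul_zero,
      add_zero] at h0
    exact_mod_cast h0
  exact ⟨hα, hβ, hγ⟩

end Indep
section Assemble

lemma sum_dite_subtype {M : Type*} [AddCommMonoid M] {α : Type*} [Fintype α]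
    (P : α → Prop) [DecidablePred P] (f : {x : α // P x} → M) :
    ∑ x : α, (if h : P x then f ⟨x, h⟩ else 0) = ∑ x : {x : α // P x}, f x := by
  rw [Finset.sum_dite]
  simp only [Finset.sum_const_zero, add_zero]
  exact Fintype.sum_equiv (Equiv.subtypeEquivRight (fun x => by simp)) _ _ (fun x => rfl)

variable (p : ℕ)

/-- The index type of the spanning family. -/
abbrev GenIdx :=
  Fin (p^2) ⊕ ({j : Fin (p^2) // p ≤ j.val} ⊕ Fin p × {s : Fin p // s.val ≠ 0})

/-- The spanning family. -/
def genFam : GenIdx p → Matrix (Fin (p^2)) (Fin (p^2)) ℂ :=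
  Sum.elim (fun i => proj (p^2) (stdVec (p^2) i))
    (Sum.elim (fun j => proj (p^2) (fourierVec (p^2) j.1))
      (fun ms => proj (p^2) (psiPQ (p^2) p p ms.1 ms.2.1)))

lemma genFam_li (hp : 0 < p) : LinearIndependent ℝ (genFam p) := by
  rw [Fintype.linearIndependent_iff]
  intro g hg
  set α : Fin (p^2) → ℝ := fun i => g (Sum.inl i) with hα_def
  set β : Fin (p^2) → ℝ :=
    fun j => if h : p ≤ j.val then g (Sum.inr (Sum.inl ⟨j, h⟩)) else 0 with hβ_def
  set γ : Fin p → Fin p → ℝ :=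
    fun m s => if h : s.val ≠ 0 then g (Sum.inr (Sum.inr (m, ⟨s, h⟩))) else 0 with hγ_def
  have hβ0 : ∀ j : Fin (p^2), j.val < p → β j = 0 := fun j hj => dif_neg (by omega)
  have hγ0 : ∀ m s : Fin p, s.val = 0 → γ m s = 0 := fun m s hs => dif_neg (by omega)
  have hsum : ∑ i, α i • proj (p^2) (stdVec (p^2) i)
      + ∑ j, β j • proj (p^2) (fourierVec (p^2) j)
      + ∑ m : Fin p, ∑ s : Fin p, γ m s • proj (p^2) (psiPQ (p^2) p p m s) = 0 := by
    have e2 : ∑ js : {j : Fin (p^2) // p ≤ j.val},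
          g (Sum.inr (Sum.inl js)) • genFam p (Sum.inr (Sum.inl js))
        = ∑ j : Fin (p^2), β j • proj (p^2) (fourierVec (p^2) j) := by
      rw [← sum_dite_subtype (fun j : Fin (p^2) => p ≤ j.val)
          (fun js => g (Sum.inr (Sum.inl js)) • genFam p (Sum.inr (Sum.inl js)))]
      refine Finset.sum_congr rfl fun j _ => ?_
      by_cases h : p ≤ j.val
      · rw [dif_pos h]
        simp only [hβ_def, dif_pos h]
        rfl
      · rw [dif_neg h]
        simp only [hβ_def, dif_neg h, zero_smul]
    have e3 : ∑ m : Fin p, ∑ sv : {s : Fin p // s.val ≠ 0},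
          g (Sum.inr (Sum.inr (m, sv))) • genFam p (Sum.inr (Sum.inr (m, sv)))
        = ∑ m : Fin p, ∑ s : Fin p, γ m s • proj (p^2) (psiPQ (p^2) p p m s) := by
      refine Finset.sum_congr rfl fun m _ => ?_
      rw [← sum_dite_subtype (fun s : Fin p => s.val ≠ 0)
          (fun sv => g (Sum.inr (Sum.inr (m, sv))) • genFam p (Sum.inr (Sum.inr (m, sv))))]
      refine Finset.sum_congr rfl fun s _ => ?_
      by_cases h : s.val ≠ 0
      · rw [dif_pos h]
        simp only [hγ_def, dif_pos h]
        rfl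
      · rw [dif_neg h]
        simp only [hγ_def, dif_neg h, zero_smul]
    rw [← hg, Fintype.sum_sum_type, Fintype.sum_sum_type, Fintype.sum_prod_type, e2, e3]
    exact add_assoc _ _ _
  obtain ⟨hA, hB, hC⟩ := indep_coeffs hp α β γ hβ0 hγ0 hsum
  rintro (i | j | ms)
  · exact hA i
  · have h := hB j.1
    rw [hβ_def] at h
    simpa only [dif_pos j.2, Subtype.coe_eta] using h
  · have h := hC ms.1 ms.2.1
    rw [hγ_def] at h
    simpa only [dif_pos ms.2.2, Subtype.coe_eta] using h

lemma memC (hp : 0 < p) (m s : Fin p) :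
    proj (p^2) (psiPQ (p^2) p p m s)
      ∈ Submodule.span ℝ (Set.range (genFam p)) := by
  by_cases hs : s.val ≠ 0
  · exact Submodule.subset_span ⟨Sum.inr (Sum.inr (m, ⟨s, hs⟩)), rfl⟩
  · push_neg at hs
    have hsplit : proj (p^2) (psiPQ (p^2) p p m s)
        + ∑ s' ∈ Finset.univ.erase s, proj (p^2) (psiPQ (p^2) p p m s')
        = ∑ k : Fin p, proj (p^2) (stdVec (p^2) (aidx hp rfl k m)) := by
      rw [Finset.add_sum_erase
        (f := fun s' => proj (p^2) (psiPQ (p^2) p p m s')) _ (Finset.mem_univ s)]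
      exact relR1 hp rfl m
    have heq : proj (p^2) (psiPQ (p^2) p p m s)
        = (∑ k : Fin p, proj (p^2) (stdVec (p^2) (aidx hp rfl k m)))
          - ∑ s' ∈ Finset.univ.erase s, proj (p^2) (psiPQ (p^2) p p m s') := by
      rw [← hsplit]
      abel
    rw [heq]
    refine sub_mem (Submodule.sum_mem _ fun k _ =>
      Submodule.subset_span ⟨Sum.inl (aidx hp rfl k m), rfl⟩)
      (Submodule.sum_mem _ fun s' hs' => ?_)
    have hs'0 : s'.val ≠ 0 := by
      intro h0
      exact (Finset.mem_erase.1 hs').1 (Fin.ext (h0.trans hs.symm))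
    exact Submodule.subset_span ⟨Sum.inr (Sum.inr (m, ⟨s', hs'0⟩)), rfl⟩

lemma memB (hp : 0 < p) (j : Fin (p^2)) :
    proj (p^2) (fourierVec (p^2) j)
      ∈ Submodule.span ℝ (Set.range (genFam p)) := by
  by_cases hj : p ≤ j.val
  · exact Submodule.subset_span ⟨Sum.inr (Sum.inl ⟨j, hj⟩), rfl⟩
  · push_neg at hj
    set s : Fin p := ⟨j.val, hj⟩ with hs_def
    set t₀ : Fin p := ⟨0, hp⟩ with ht₀_def
    have hidx : aidx hp rfl t₀ s = j := by
      apply Fin.ext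
      show s.val + t₀.val * p = j.val
      simp [hs_def, ht₀_def]
    have hsplit : proj (p^2) (fourierVec (p^2) j)
        + ∑ t ∈ Finset.univ.erase t₀, proj (p^2) (fourierVec (p^2) (aidx hp rfl t s))
        = ∑ m : Fin p, proj (p^2) (psiPQ (p^2) p p m s) := by
      rw [← hidx, Finset.add_sum_erase
        (f := fun t => proj (p^2) (fourierVec (p^2) (aidx hp rfl t s))) _ (Finset.mem_univ t₀)]
      exact (relR2 hp rfl s).symm
    have heq : proj (p^2) (fourierVec (p^2) j)
        = (∑ m : Fin p, proj (p^2) (psiPQ (p^2) p p m s))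
          - ∑ t ∈ Finset.univ.erase t₀, proj (p^2) (fourierVec (p^2) (aidx hp rfl t s)) := by
      rw [← hsplit]
      abel
    rw [heq]
    refine sub_mem (Submodule.sum_mem _ fun m _ => memC p hp m s)
      (Submodule.sum_mem _ fun t ht => ?_)
    have ht0 : t.val ≠ 0 := by
      intro h0
      exact (Finset.mem_erase.1 ht).1 (Fin.ext h0)
    have hge : p ≤ (aidx hp rfl t s).val := by
      show p ≤ s.val + t.val * p
      have h2 : p ≤ t.val * p := Nat.le_mul_of_pos_left p (Nat.pos_of_ne_zero ht0)
      omega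
    exact Submodule.subset_span ⟨Sum.inr (Sum.inl ⟨aidx hp rfl t s, hge⟩), rfl⟩

lemma card_subB (hp : 0 < p) : Fintype.card {j : Fin (p^2) // p ≤ j.val} = p^2 - p := by
  have e : {j : Fin (p^2) // p ≤ j.val} ≃ Fin (p^2 - p) :=
    { toFun := fun j => ⟨j.1.val - p, by have h1 := j.1.isLt; have h2 := j.2; omega⟩
      invFun := fun k => ⟨⟨k.val + p, by have := k.isLt; omega⟩, by simp⟩
      left_inv := fun j => by
        apply Subtype.ext
        apply Fin.ext
        have := j.2
        show j.1.val - p + p = j.1.val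
        omega
      right_inv := fun k => by
        apply Fin.ext
        show k.val + p - p = k.val
        omega }
  rw [Fintype.card_congr e, Fintype.card_fin]

lemma card_subC (hp : 0 < p) : Fintype.card {s : Fin p // s.val ≠ 0} = p - 1 := by
  have e : {s : Fin p // s.val ≠ 0} ≃ Fin (p - 1) :=
    { toFun := fun s => ⟨s.1.val - 1, by have h1 := s.1.isLt; have h2 := s.2; omega⟩
      invFun := fun k => ⟨⟨k.val + 1, by have := k.isLt; omega⟩, by simp⟩
      left_inv := fun s => by
        apply Subtype.ext
        apply Fin.ext
        have := s.2
        show s.1.val - 1 + 1 = s.1.val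
        omega
      right_inv := fun k => by
        apply Fin.ext
        show k.val + 1 - 1 = k.val
        omega }
  rw [Fintype.card_congr e, Fintype.card_fin]

end Assemble
/-- For `d = p²` with `p` prime, the real span of `A ∪ B ∪ C`
has dimension `3p² − 2p`. -/
theorem stmt1 (p d : ℕ) (hp : p.Prime) (hd : d = p ^ 2) :
    Module.finrank ℝ (Submodule.span ℝ (setA d ∪ setB d ∪ setC2 d p)) =
      3 * p ^ 2 - 2 * p := by
  subst hd
  have hp0 : 0 < p := hp.pos
  have hspan : Submodule.span ℝ (setA (p^2) ∪ setB (p^2) ∪ setC2 (p^2) p)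
      = Submodule.span ℝ (Set.range (genFam p)) := by
    apply le_antisymm
    · rw [Submodule.span_le]
      rintro M hM
      rcases hM with (⟨i, rfl⟩ | ⟨j, rfl⟩) | ⟨m, s, rfl⟩
      · exact Submodule.subset_span ⟨Sum.inl i, rfl⟩
      · exact memB p hp0 j
      · exact memC p hp0 m s
    · rw [Submodule.span_le]
      rintro M ⟨x, rfl⟩
      apply Submodule.subset_span
      rcases x with i | j | ms
      · exact Or.inl (Or.inl ⟨i, rfl⟩)
      · exact Or.inl (Or.inr ⟨j.1, rfl⟩)
      · exact Or.inr ⟨ms.1, ms.2.1, rfl⟩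
  rw [hspan, finrank_span_eq_card (genFam_li p hp0)]
  simp only [Fintype.card_sum, Fintype.card_prod, Fintype.card_fin,
    card_subB p hp0, card_subC p hp0]
  have e : p * (p - 1) = p ^ 2 - p := by
    cases p with
    | zero => simp
    | succ n => rw [Nat.succ_sub_one, sq, Nat.mul_succ, Nat.add_sub_cancel]
  rw [e]
  have hle : p ≤ p ^ 2 := Nat.le_self_pow two_ne_zero p
  generalize hP : p ^ 2 = P at hle ⊢
  omega
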